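/- (Theorem 3.2, Lipschitz-type estimate) Let n ≥ 1 be a natural number, 0 < q < p ≤ 1, 0 < α ≤ 1, M > 0, and let E be a nonempty closed subset of [0,∞). Then for every f ∈ W̃_{α,E} with constant M and every x ≥ 0, | L_n^{p,q}(f;x) − pq·f(x) | ≤ M·( δ_n(x)^{α/2} + 2·d(x,E)^α ). -/

import Mathlib

open Finset Filter
open scoped Classical

noncomputable section

/-- The `(p,q)`-integer `[n]_{p,q} = (p^n - q^n)/(p - q)`. -/
def pqInt (p q : ℝ) (n : ℕ) : ℝ := (p ^ n - q ^ n) / (p - q)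

/-- The `(p,q)`-factorial. -/
def pqFact (p q : ℝ) : ℕ → ℝ
  | 0 => 1
  | n + 1 => pqFact p q n * pqInt p q (n + 1)

/-- The `(p,q)`-binomial coefficient. -/
def pqBinom (p q : ℝ) (n k : ℕ) : ℝ :=
  pqFact p q n / (pqFact p q k * pqFact p q (n - k))

/-- `ℓ_n^{p,q}(x) = ∏_{s=0}^{n-1} (p^s + q^s x)`. -/
def pqEll (p q : ℝ) (n : ℕ) (x : ℝ) : ℝ :=
  ∏ s ∈ Finset.range n, (p ^ s + q ^ s * x)

/-- The node `p^{n-k+1}[k]_{p,q} / ([n-k+1]_{p,q} q^k)`. -/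
def pqNode (p q : ℝ) (n k : ℕ) : ℝ :=
  p ^ (n - k + 1) * pqInt p q k / (pqInt p q (n - k + 1) * q ^ k)

/-- The `(p,q)`-Bleimann–Butzer–Hahn operator. -/
def bbh (p q : ℝ) (n : ℕ) (f : ℝ → ℝ) (x : ℝ) : ℝ :=
  (p * q / pqEll p q n x) *
    ∑ k ∈ Finset.range (n + 1),
      f (pqNode p q n k) * p ^ ((n - k) * (n - k - 1) / 2) *
        q ^ (k * (k - 1) / 2) * pqBinom p q n k * x ^ k

/-- `δ_n(x)` from Theorem 3.1. -/
def pqDelta (p q : ℝ) (n : ℕ) (x : ℝ) : ℝ :=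
  (x / (1 + x)) ^ 2 *
      (p ^ 2 * q ^ 3 * pqInt p q n * pqInt p q (n - 1) / (pqInt p q (n + 1)) ^ 2 *
          ((1 + x) / (p + q * x)) -
        2 * p * q * pqInt p q n / pqInt p q (n + 1) + 1) +
    p ^ (n + 2) * q * pqInt p q n / (pqInt p q (n + 1)) ^ 2 * (x / (1 + x))

/-- Statistical convergence of a real sequence. -/
def StatConv (a : ℕ → ℝ) (l : ℝ) : Prop :=
  ∀ ε > (0 : ℝ), Tendsto (fun n : ℕ =>
    (((Finset.range (n + 1)).filter (fun k => ε ≤ |a k - l|)).card : ℝ) / n)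
    atTop (nhds 0)

/-- A modulus of continuity. -/
def IsModulus (ω : ℝ → ℝ) : Prop :=
  (∀ δ, 0 ≤ δ → 0 ≤ ω δ) ∧
  (∀ δ₁ δ₂, 0 ≤ δ₁ → δ₁ ≤ δ₂ → ω δ₁ ≤ ω δ₂) ∧
  (∀ δ₁ δ₂, 0 ≤ δ₁ → 0 ≤ δ₂ → ω (δ₁ + δ₂) ≤ ω δ₁ + ω δ₂) ∧
  Tendsto ω (nhdsWithin 0 (Set.Ioi 0)) (nhds 0)

/-- Membership in the class `H_ω`. -/
def MemHomega (ω f : ℝ → ℝ) : Prop :=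
  ∀ x y : ℝ, 0 ≤ x → 0 ≤ y → |f x - f y| ≤ ω |x / (1 + x) - y / (1 + y)|

/-- The modulus `ω̃(f; δ)`. -/
def omegaTilde (f : ℝ → ℝ) (δ : ℝ) : ℝ :=
  sSup {d | ∃ t x : ℝ, 0 ≤ t ∧ 0 ≤ x ∧ |t / (1 + t) - x / (1 + x)| ≤ δ ∧ d = |f t - f x|}

/-- The bivariate `(p,q)`-Bleimann–Butzer–Hahn operator. -/
def bbh2 (p₁ p₂ q₁ q₂ : ℝ) (n₁ n₂ : ℕ) (f : ℝ → ℝ → ℝ) (x y : ℝ) : ℝ :=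
  (p₁ * p₂ * q₁ * q₂ / (pqEll p₁ q₁ n₁ x * pqEll p₂ q₂ n₂ y)) *
    ∑ k₁ ∈ Finset.range (n₁ + 1), ∑ k₂ ∈ Finset.range (n₂ + 1),
      f (pqNode p₁ q₁ n₁ k₁) (pqNode p₂ q₂ n₂ k₂) *
        p₁ ^ ((n₁ - k₁) * (n₁ - k₁ - 1) / 2) * q₁ ^ (k₁ * (k₁ - 1) / 2) *
        p₂ ^ ((n₂ - k₂) * (n₂ - k₂ - 1) / 2) * q₂ ^ (k₂ * (k₂ - 1) / 2) *
        pqBinom p₁ q₁ n₁ k₁ * pqBinom p₂ q₂ n₂ k₂ * x ^ k₁ * y ^ k₂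

/-- Statistical convergence of a double real sequence (Pringsheim sense). -/
def StatConv2 (a : ℕ → ℕ → ℝ) (l : ℝ) : Prop :=
  ∀ ε > (0 : ℝ), Tendsto (fun N : ℕ × ℕ =>
    ((((Finset.range (N.1 + 1)) ×ˢ (Finset.range (N.2 + 1))).filter
        (fun jk => ε ≤ |a jk.1 jk.2 - l|)).card : ℝ) / (N.1 * N.2))
    atTop (nhds 0)

/-- A bivariate modulus of continuity. -/
def IsModulus2 (ω : ℝ → ℝ → ℝ) : Prop :=
  (∀ a b, 0 ≤ a → 0 ≤ b → 0 ≤ ω a b) ∧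
  (∀ a a' b, 0 ≤ a → a ≤ a' → 0 ≤ b → ω a b ≤ ω a' b) ∧
  (∀ a b b', 0 ≤ a → 0 ≤ b → b ≤ b' → ω a b ≤ ω a b') ∧
  (∀ a a' b, 0 ≤ a → 0 ≤ a' → 0 ≤ b → ω (a + a') b ≤ ω a b + ω a' b) ∧
  (∀ a b b', 0 ≤ a → 0 ≤ b → 0 ≤ b' → ω a (b + b') ≤ ω a b + ω a b') ∧
  Tendsto (fun d : ℝ × ℝ => ω d.1 d.2)
    (nhdsWithin (0, 0) (Set.Ioi 0 ×ˢ Set.Ioi 0)) (nhds 0)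

/-- Membership in the class `H_{ω₂}`. -/
def MemHomega2 (ω g : ℝ → ℝ → ℝ) : Prop :=
  ∀ u₁ v₁ u₂ v₂ : ℝ, 0 ≤ u₁ → 0 ≤ v₁ → 0 ≤ u₂ → 0 ≤ v₂ →
    |g u₁ v₁ - g u₂ v₂| ≤
      ω |u₁ / (1 + u₁) - u₂ / (1 + u₂)| |v₁ / (1 + v₁) - v₂ / (1 + v₂)|

/-- The bivariate modulus `ω̃(g; δ₁, δ₂)`. -/
def omegaTilde2 (g : ℝ → ℝ → ℝ) (δ₁ δ₂ : ℝ) : ℝ :=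
  sSup {d | ∃ t s x y : ℝ, 0 ≤ t ∧ 0 ≤ s ∧ 0 ≤ x ∧ 0 ≤ y ∧
    |t / (1 + t) - x / (1 + x)| ≤ δ₁ ∧ |s / (1 + s) - y / (1 + y)| ≤ δ₂ ∧
    d = |g t s - g x y|}

section Basics

variable {p q : ℝ} (hq : 0 < q) (hqp : q < p)

lemma pqInt_zero : pqInt p q 0 = 0 := by simp [pqInt]

include hqp in
lemma pqInt_one : pqInt p q 1 = 1 := by
  have : p - q ≠ 0 := by intro h; linarith
  simp [pqInt, this]

include hq hqp in
lemma pqInt_pos {m : ℕ} (hm : 1 ≤ m) : 0 < pqInt p q m := by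
  have h1 : q ^ m < p ^ m := by
    apply pow_lt_pow_left₀ hqp hq.le (by omega)
  have h2 : 0 < p - q := by linarith
  exact div_pos (by linarith) h2

include hq hqp in
lemma pqInt_nonneg (m : ℕ) : 0 ≤ pqInt p q m := by
  cases m with
  | zero => simp [pqInt_zero]
  | succ m => exact (pqInt_pos hq hqp (by omega)).le

include hq hqp in
lemma pqFact_pos (m : ℕ) : 0 < pqFact p q m := by
  induction m with
  | zero => norm_num [pqFact]
  | succ m ih => exact mul_pos ih (pqInt_pos hq hqp (by omega))

include hq hqp in
lemma pqBinom_pos (m k : ℕ) : 0 < pqBinom p q m k :=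
  div_pos (pqFact_pos hq hqp m) (mul_pos (pqFact_pos hq hqp k) (pqFact_pos hq hqp _))

include hq hqp in
lemma pqBinom_self_zero (m : ℕ) : pqBinom p q m 0 = 1 := by
  have h0 : pqFact p q 0 = 1 := rfl
  simp [pqBinom, h0, div_self (pqFact_pos hq hqp m).ne']

include hq hqp in
lemma pqBinom_self (m : ℕ) : pqBinom p q m m = 1 := by
  have h0 : pqFact p q 0 = 1 := rfl
  simp [pqBinom, h0, div_self (pqFact_pos hq hqp m).ne']

include hqp in
lemma pqInt_add (a b : ℕ) : pqInt p q (a + b) = p ^ b * pqInt p q a + q ^ a * pqInt p q b := by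
  have hpq : p - q ≠ 0 := sub_ne_zero.mpr (by intro h; linarith)
  unfold pqInt
  field_simp
  ring

include hq hqp in
lemma pqBinom_factor (n k : ℕ) (hk : k ≤ n) :
    pqInt p q (k + 1) * pqBinom p q (n + 1) (k + 1) = pqInt p q (n + 1) * pqBinom p q n k := by
  have h1 : pqFact p q (k + 1) = pqFact p q k * pqInt p q (k + 1) := rfl
  have h2 : pqFact p q (n + 1) = pqFact p q n * pqInt p q (n + 1) := rfl
  have h3 : (n + 1) - (k + 1) = n - k := by omega
  rw [pqBinom, pqBinom, h1, h2, h3]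
  have f1 := (pqFact_pos hq hqp k).ne'
  have f2 := (pqFact_pos hq hqp (n - k)).ne'
  have f3 := (pqInt_pos hq hqp (m := k + 1) (by omega)).ne'
  have f4 := (pqFact_pos hq hqp n).ne'
  field_simp

end Basics
section Binom

variable {p q : ℝ} (hq : 0 < q) (hqp : q < p)

lemma half_succ (a : ℕ) : (a + 1) * a / 2 = a * (a - 1) / 2 + a := by
  cases a with
  | zero => rfl
  | succ b =>
    show (b + 2) * (b + 1) / 2 = (b + 1) * b / 2 + (b + 1)
    rw [show (b + 2) * (b + 1) = (b + 1) * b + (b + 1) * 2 by ring,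
      Nat.add_mul_div_right _ _ (by norm_num)]

include hq hqp in
lemma pqBinom_pascal (j d : ℕ) :
    pqBinom p q (j + d + 2) (j + 1) =
      p ^ (j + 1) * pqBinom p q (j + d + 1) (j + 1) + q ^ (d + 1) * pqBinom p q (j + d + 1) j := by
  have h1 : pqFact p q (j + 1) = pqFact p q j * pqInt p q (j + 1) := rfl
  have h2 : pqFact p q (j + d + 2) = pqFact p q (j + d + 1) * pqInt p q (j + d + 2) := rfl
  have h3 : pqFact p q (d + 1) = pqFact p q d * pqInt p q (d + 1) := rfl
  have e1 : j + d + 2 - (j + 1) = d + 1 := by omega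
  have e2 : j + d + 1 - (j + 1) = d := by omega
  have e3 : j + d + 1 - j = d + 1 := by omega
  have key : pqInt p q (j + d + 2) =
      p ^ (j + 1) * pqInt p q (d + 1) + q ^ (d + 1) * pqInt p q (j + 1) := by
    have := pqInt_add hqp (d + 1) (j + 1)
    rw [show d + 1 + (j + 1) = j + d + 2 by omega] at this
    linarith [this]
  rw [pqBinom, pqBinom, pqBinom, e1, e2, e3, h1, h2, h3, key]
  have f1 := (pqFact_pos hq hqp j).ne'
  have f2 := (pqFact_pos hq hqp d).ne'
  have f3 := (pqFact_pos hq hqp (j + d + 1)).ne'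
  have f4 := (pqInt_pos hq hqp (m := j + 1) (by omega)).ne'
  have f5 := (pqInt_pos hq hqp (m := d + 1) (by omega)).ne'
  field_simp

include hq hqp in
lemma pq_binomial (m : ℕ) (x : ℝ) :
    ∑ k ∈ Finset.range (m + 1),
      p ^ ((m - k) * (m - k - 1) / 2) * q ^ (k * (k - 1) / 2) * pqBinom p q m k * x ^ k
      = pqEll p q m x := by
  induction m with
  | zero =>
    simp [pqEll, pqBinom_self_zero hq hqp]
  | succ m ih =>
    have hRHS : pqEll p q (m + 1) x = pqEll p q m x * (p ^ m + q ^ m * x) := by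
      rw [pqEll, pqEll, Finset.prod_range_succ]
    rw [hRHS, ← ih, Finset.sum_range_succ' (fun k =>
      p ^ ((m + 1 - k) * (m + 1 - k - 1) / 2) * q ^ (k * (k - 1) / 2) * pqBinom p q (m + 1) k * x ^ k),
      Finset.sum_range_succ (fun j =>
      p ^ ((m + 1 - (j + 1)) * (m + 1 - (j + 1) - 1) / 2) * q ^ ((j + 1) * (j + 1 - 1) / 2) *
        pqBinom p q (m + 1) (j + 1) * x ^ (j + 1))]
    have expand : (∑ k ∈ Finset.range (m + 1),
        p ^ ((m - k) * (m - k - 1) / 2) * q ^ (k * (k - 1) / 2) * pqBinom p q m k * x ^ k) *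
        (p ^ m + q ^ m * x)
        = (∑ k ∈ Finset.range (m + 1),
            p ^ ((m - k) * (m - k - 1) / 2) * q ^ (k * (k - 1) / 2) * pqBinom p q m k * x ^ k * p ^ m)
          + (∑ k ∈ Finset.range (m + 1),
            p ^ ((m - k) * (m - k - 1) / 2) * q ^ (k * (k - 1) / 2 + m) * pqBinom p q m k * x ^ (k + 1)) := by
      rw [mul_add, Finset.sum_mul, Finset.sum_mul]
      congr 1
      apply Finset.sum_congr rfl
      intro k _
      rw [pow_add]
      ring
    rw [expand]
    -- peel first sum with sum_range_succ', second with sum_range_succ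
    rw [Finset.sum_range_succ' (fun k =>
      p ^ ((m - k) * (m - k - 1) / 2) * q ^ (k * (k - 1) / 2) * pqBinom p q m k * x ^ k * p ^ m),
      Finset.sum_range_succ (fun k =>
      p ^ ((m - k) * (m - k - 1) / 2) * q ^ (k * (k - 1) / 2 + m) * pqBinom p q m k * x ^ (k + 1))]
    have hmid : ∑ j ∈ Finset.range m,
        p ^ ((m + 1 - (j + 1)) * (m + 1 - (j + 1) - 1) / 2) * q ^ ((j + 1) * (j + 1 - 1) / 2) *
          pqBinom p q (m + 1) (j + 1) * x ^ (j + 1)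
        = (∑ j ∈ Finset.range m,
            p ^ ((m - (j + 1)) * (m - (j + 1) - 1) / 2) * q ^ ((j + 1) * (j + 1 - 1) / 2) *
              pqBinom p q m (j + 1) * x ^ (j + 1) * p ^ m)
          + ∑ j ∈ Finset.range m,
            p ^ ((m - j) * (m - j - 1) / 2) * q ^ (j * (j - 1) / 2 + m) * pqBinom p q m j * x ^ (j + 1) := by
      rw [← Finset.sum_add_distrib]
      apply Finset.sum_congr rfl
      intro j hj
      have hjm : j < m := Finset.mem_range.mp hj
      obtain ⟨d, rfl⟩ : ∃ d, m = j + d + 1 := ⟨m - j - 1, by omega⟩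
      have e1 : j + d + 1 + 1 - (j + 1) = d + 1 := by omega
      have e2 : d + 1 - 1 = d := by omega
      have e3 : j + d + 1 - (j + 1) = d := by omega
      have e4 : j + d + 1 - j = d + 1 := by omega
      have e5 : j + 1 - 1 = j := by omega
      rw [e1, e3, e4, e5, e2]
      rw [show j + d + 1 + 1 = j + d + 2 by omega, pqBinom_pascal hq hqp j d]
      have g1 : p ^ ((d + 1) * d / 2) * p ^ (j + 1) = p ^ (d * (d - 1) / 2) * p ^ (j + d + 1) := by
        rw [← pow_add, ← pow_add, half_succ d]
        congr 1
        omega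
      have g2 : q ^ ((j + 1) * j / 2) * q ^ (d + 1) = q ^ (j * (j - 1) / 2 + (j + d + 1)) := by
        rw [← pow_add, half_succ j]
        congr 1
        omega
      calc p ^ ((d + 1) * d / 2) * q ^ ((j + 1) * j / 2) *
            (p ^ (j + 1) * pqBinom p q (j + d + 1) (j + 1) + q ^ (d + 1) * pqBinom p q (j + d + 1) j) *
            x ^ (j + 1)
          = (p ^ ((d + 1) * d / 2) * p ^ (j + 1)) * q ^ ((j + 1) * j / 2) *
              pqBinom p q (j + d + 1) (j + 1) * x ^ (j + 1)
            + p ^ ((d + 1) * d / 2) * (q ^ ((j + 1) * j / 2) * q ^ (d + 1)) *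
              pqBinom p q (j + d + 1) j * x ^ (j + 1) := by ring
        _ = _ := by
            rw [g1, g2]
            ring
    rw [hmid]
    -- endpoints
    have hB0 : p ^ ((m + 1 - 0) * (m + 1 - 0 - 1) / 2) * q ^ (0 * (0 - 1) / 2) *
        pqBinom p q (m + 1) 0 * x ^ 0
        = p ^ ((m - 0) * (m - 0 - 1) / 2) * q ^ (0 * (0 - 1) / 2) * pqBinom p q m 0 * x ^ 0 * p ^ m := by
      rw [pqBinom_self_zero hq hqp, pqBinom_self_zero hq hqp]
      simp only [Nat.sub_zero, Nat.add_sub_cancel, Nat.zero_mul, Nat.zero_div, pow_zero,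
        mul_one, one_mul]
      rw [half_succ m, pow_add]
    have hBtop : p ^ ((m + 1 - (m + 1)) * (m + 1 - (m + 1) - 1) / 2) * q ^ ((m + 1) * (m + 1 - 1) / 2) *
        pqBinom p q (m + 1) (m + 1) * x ^ (m + 1)
        = p ^ ((m - m) * (m - m - 1) / 2) * q ^ (m * (m - 1) / 2 + m) * pqBinom p q m m * x ^ (m + 1) := by
      rw [pqBinom_self hq hqp, pqBinom_self hq hqp]
      simp only [Nat.sub_self, Nat.zero_mul, Nat.zero_sub, pow_zero, one_mul, Nat.add_sub_cancel]
      congr 2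
      rw [half_succ m]
    rw [hB0, hBtop]
    ring
end Binom
section Shift

variable {p q : ℝ} (hq : 0 < q) (hqp : q < p)

include hq hqp in
lemma pq_binomial_shift (r m : ℕ) (x : ℝ) :
    ∑ k ∈ Finset.range (m + 1),
      p ^ ((m - k) * (m - k - 1) / 2) * q ^ (k * (k - 1) / 2) * pqBinom p q m k *
        (q ^ (r * k) * x ^ k * p ^ (r * (m - k)))
      = ∏ s ∈ Finset.range m, (p ^ (s + r) + q ^ (s + r) * x) := by
  have hp0 : (0:ℝ) < p := lt_trans hq hqp
  have hpne : p ≠ 0 := hp0.ne'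
  have base := pq_binomial hq hqp m (q ^ r * x / p ^ r)
  have lhs_eq : ∑ k ∈ Finset.range (m + 1),
      p ^ ((m - k) * (m - k - 1) / 2) * q ^ (k * (k - 1) / 2) * pqBinom p q m k *
        (q ^ (r * k) * x ^ k * p ^ (r * (m - k)))
      = p ^ (r * m) * ∑ k ∈ Finset.range (m + 1),
          p ^ ((m - k) * (m - k - 1) / 2) * q ^ (k * (k - 1) / 2) * pqBinom p q m k *
            (q ^ r * x / p ^ r) ^ k := by
    rw [Finset.mul_sum]
    apply Finset.sum_congr rfl
    intro k hk
    have hkm : k ≤ m := Nat.lt_succ_iff.mp (Finset.mem_range.mp hk)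
    have hsplit : r * m = r * (m - k) + r * k := by
      rw [← Nat.mul_add, Nat.sub_add_cancel hkm]
    rw [hsplit, pow_add, div_pow, mul_pow, ← pow_mul q r k, ← pow_mul p r k]
    have hprk : (p : ℝ) ^ (r * k) ≠ 0 := pow_ne_zero _ hpne
    field_simp
  rw [lhs_eq, base, pqEll,
    show p ^ (r * m) = ∏ _s ∈ Finset.range m, p ^ r by
      rw [Finset.prod_const, Finset.card_range, ← pow_mul],
    ← Finset.prod_mul_distrib]
  apply Finset.prod_congr rfl
  intro s _
  rw [pow_add, pow_add]
  field_simp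

lemma ell_peel1 (m : ℕ) (x : ℝ) :
    pqEll p q (m + 1) x
      = (∏ s ∈ Finset.range m, (p ^ (s + 1) + q ^ (s + 1) * x)) * (1 + x) := by
  rw [pqEll, Finset.prod_range_succ']
  norm_num

lemma ell_peel2 (m : ℕ) (x : ℝ) :
    pqEll p q (m + 2) x
      = (∏ s ∈ Finset.range m, (p ^ (s + 2) + q ^ (s + 2) * x)) * ((p + q * x) * (1 + x)) := by
  rw [pqEll, Finset.prod_range_succ', Finset.prod_range_succ']
  have : ∀ s, (s : ℕ) + 1 + 1 = s + 2 := fun s => rfl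
  norm_num [mul_assoc]

end Shift
section Moments

variable {p q : ℝ} (hq : 0 < q) (hqp : q < p)

include hq hqp in
lemma moment1 (m : ℕ) (x : ℝ) :
    (∑ k ∈ Finset.range (m + 2),
        p ^ ((m + 1 - k) * (m + 1 - k - 1) / 2) * q ^ (k * (k - 1) / 2) * pqBinom p q (m + 1) k *
          x ^ k * (p ^ (m + 1 - k + 1) * pqInt p q k)) * (1 + x)
      = pqInt p q (m + 1) * p * x * pqEll p q (m + 1) x := by
  rw [Finset.sum_range_succ' (fun k =>
    p ^ ((m + 1 - k) * (m + 1 - k - 1) / 2) * q ^ (k * (k - 1) / 2) * pqBinom p q (m + 1) k *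
      x ^ k * (p ^ (m + 1 - k + 1) * pqInt p q k))]
  have h0 : p ^ ((m + 1 - 0) * (m + 1 - 0 - 1) / 2) * q ^ (0 * (0 - 1) / 2) *
      pqBinom p q (m + 1) 0 * x ^ 0 * (p ^ (m + 1 - 0 + 1) * pqInt p q 0) = 0 := by
    simp [pqInt_zero]
  rw [h0, add_zero]
  have hterm : ∀ j ∈ Finset.range (m + 1),
      p ^ ((m + 1 - (j + 1)) * (m + 1 - (j + 1) - 1) / 2) * q ^ ((j + 1) * (j + 1 - 1) / 2) *
        pqBinom p q (m + 1) (j + 1) * x ^ (j + 1) * (p ^ (m + 1 - (j + 1) + 1) * pqInt p q (j + 1))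
      = pqInt p q (m + 1) * p * x *
          (p ^ ((m - j) * (m - j - 1) / 2) * q ^ (j * (j - 1) / 2) * pqBinom p q m j *
            (q ^ (1 * j) * x ^ j * p ^ (1 * (m - j)))) := by
    intro j hj
    have hjm : j ≤ m := Nat.lt_succ_iff.mp (Finset.mem_range.mp hj)
    obtain ⟨d, rfl⟩ : ∃ d, m = j + d := ⟨m - j, by omega⟩
    have hfac := pqBinom_factor hq hqp (j + d) j (by omega)
    have e1 : j + d + 1 - (j + 1) = d := by omega
    have e2 : j + d - j = d := by omega
    have e3 : j + 1 - 1 = j := by omega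
    rw [e1, e2, e3, half_succ j, pow_add, one_mul, one_mul]
    linear_combination
      (p ^ (d * (d - 1) / 2) * q ^ (j * (j - 1) / 2) * q ^ j * x ^ (j + 1) * p ^ (d + 1)) * hfac
  rw [Finset.sum_congr rfl hterm, ← Finset.mul_sum, pq_binomial_shift hq hqp 1 (m := m) x]
  rw [ell_peel1]
  ring
lemma half_succ2 (a : ℕ) : (a + 1 + 1) * (a + 1) / 2 = a * (a - 1) / 2 + (2 * a + 1) := by
  have h1 := half_succ (a + 1)
  have h2 := half_succ a
  simp only [Nat.add_sub_cancel] at h1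
  omega

include hq hqp in
lemma momentSb (m : ℕ) (x : ℝ) :
    ∑ j ∈ Finset.range (m + 1),
      p ^ ((m - j) * (m - j - 1) / 2) * q ^ ((j + 1) * (j + 1 - 1) / 2) * x ^ (j + 1) *
        p ^ (2 * (m + 1 - j)) * pqInt p q j * pqBinom p q m j
      = pqInt p q m * q * p ^ 2 * x ^ 2 *
          ((∏ s ∈ Finset.range (m - 1), (p ^ (s + 2) + q ^ (s + 2) * x)) * x ^ 0) := by
  cases m with
  | zero => simp [pqInt_zero]
  | succ w =>
    rw [Finset.sum_range_succ' (fun j =>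
      p ^ ((w + 1 - j) * (w + 1 - j - 1) / 2) * q ^ ((j + 1) * (j + 1 - 1) / 2) * x ^ (j + 1) *
        p ^ (2 * (w + 1 + 1 - j)) * pqInt p q j * pqBinom p q (w + 1) j)]
    have h0 : p ^ ((w + 1 - 0) * (w + 1 - 0 - 1) / 2) * q ^ ((0 + 1) * (0 + 1 - 1) / 2) * x ^ (0 + 1) *
        p ^ (2 * (w + 1 + 1 - 0)) * pqInt p q 0 * pqBinom p q (w + 1) 0 = 0 := by
      simp [pqInt_zero]
    rw [h0, add_zero]
    have hterm : ∀ r ∈ Finset.range (w + 1),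
        p ^ ((w + 1 - (r + 1)) * (w + 1 - (r + 1) - 1) / 2) * q ^ ((r + 1 + 1) * (r + 1 + 1 - 1) / 2) *
          x ^ (r + 1 + 1) * p ^ (2 * (w + 1 + 1 - (r + 1))) * pqInt p q (r + 1) * pqBinom p q (w + 1) (r + 1)
        = pqInt p q (w + 1) * q * p ^ 2 * x ^ 2 *
            (p ^ ((w - r) * (w - r - 1) / 2) * q ^ (r * (r - 1) / 2) * pqBinom p q w r *
              (q ^ (2 * r) * x ^ r * p ^ (2 * (w - r)))) := by
      intro r hr
      have hrw : r ≤ w := Nat.lt_succ_iff.mp (Finset.mem_range.mp hr)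
      obtain ⟨d, rfl⟩ : ∃ d, w = r + d := ⟨w - r, by omega⟩
      have hfac := pqBinom_factor hq hqp (r + d) r (by omega)
      have e1 : r + d + 1 - (r + 1) = d := by omega
      have e2 : r + d - r = d := by omega
      have e3 : r + 1 + 1 - 1 = r + 1 := by omega
      have e4 : 2 * (r + d + 1 + 1 - (r + 1)) = 2 * d + 2 := by omega
      rw [e1, e2, e3, e4, half_succ2 r, pow_add]
      linear_combination (p ^ (d * (d - 1) / 2) * q ^ (r * (r - 1) / 2) * q ^ (2 * r + 1) *
        x ^ (r + 1 + 1) * p ^ (2 * d + 2)) * hfac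
    rw [Finset.sum_congr rfl hterm, ← Finset.mul_sum,
      pq_binomial_shift hq hqp 2 (m := w) x]
    norm_num

include hq hqp in
lemma moment2 (m : ℕ) (x : ℝ) :
    (∑ k ∈ Finset.range (m + 2),
        p ^ ((m + 1 - k) * (m + 1 - k - 1) / 2) * q ^ (k * (k - 1) / 2) * pqBinom p q (m + 1) k *
          x ^ k * (p ^ (m + 1 - k + 1) * pqInt p q k) ^ 2) * ((1 + x) * (p + q * x))
      = pqInt p q (m + 1) * pqEll p q (m + 1) x *
          (x * p ^ (m + 2) * (p + q * x) + q ^ 2 * p ^ 2 * pqInt p q m * x ^ 2) := by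
  rw [Finset.sum_range_succ' (fun k =>
    p ^ ((m + 1 - k) * (m + 1 - k - 1) / 2) * q ^ (k * (k - 1) / 2) * pqBinom p q (m + 1) k *
      x ^ k * (p ^ (m + 1 - k + 1) * pqInt p q k) ^ 2)]
  have h0 : p ^ ((m + 1 - 0) * (m + 1 - 0 - 1) / 2) * q ^ (0 * (0 - 1) / 2) *
      pqBinom p q (m + 1) 0 * x ^ 0 * (p ^ (m + 1 - 0 + 1) * pqInt p q 0) ^ 2 = 0 := by
    simp [pqInt_zero]
  rw [h0, add_zero]
  have hterm : ∀ j ∈ Finset.range (m + 1),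
      p ^ ((m + 1 - (j + 1)) * (m + 1 - (j + 1) - 1) / 2) * q ^ ((j + 1) * (j + 1 - 1) / 2) *
        pqBinom p q (m + 1) (j + 1) * x ^ (j + 1) *
        (p ^ (m + 1 - (j + 1) + 1) * pqInt p q (j + 1)) ^ 2
      = pqInt p q (m + 1) * p ^ (m + 2) * x *
          (p ^ ((m - j) * (m - j - 1) / 2) * q ^ (j * (j - 1) / 2) * pqBinom p q m j *
            (q ^ (1 * j) * x ^ j * p ^ (1 * (m - j))))
        + pqInt p q (m + 1) * q *
          (p ^ ((m - j) * (m - j - 1) / 2) * q ^ ((j + 1) * (j + 1 - 1) / 2) * x ^ (j + 1) *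
            p ^ (2 * (m + 1 - j)) * pqInt p q j * pqBinom p q m j) := by
    intro j hj
    have hjm : j ≤ m := Nat.lt_succ_iff.mp (Finset.mem_range.mp hj)
    obtain ⟨d, rfl⟩ : ∃ d, m = j + d := ⟨m - j, by omega⟩
    have hfac := pqBinom_factor hq hqp (j + d) j (by omega)
    have hsplit : pqInt p q (j + 1) = p ^ j + q * pqInt p q j := by
      have h := pqInt_add hqp 1 j
      rw [show 1 + j = j + 1 by omega, pqInt_one hqp] at h
      rw [h]; ring
    have e1 : j + d + 1 - (j + 1) = d := by omega
    have e2 : j + d - j = d := by omega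
    have e3 : j + 1 - 1 = j := by omega
    have e4 : 2 * (j + d + 1 - j) = 2 * d + 2 := by omega
    rw [e1, e2, e3, e4, half_succ j, pow_add, one_mul, one_mul]
    linear_combination
      (p ^ (d * (d - 1) / 2) * q ^ (j * (j - 1) / 2) * q ^ j * x ^ (j + 1) * (p ^ (d + 1)) ^ 2 *
        pqInt p q (j + 1)) * hfac +
      (pqInt p q (j + d + 1) * pqBinom p q (j + d) j * p ^ (d * (d - 1) / 2) *
        q ^ (j * (j - 1) / 2) * q ^ j * x ^ (j + 1) * (p ^ (d + 1)) ^ 2) * hsplit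
  rw [Finset.sum_congr rfl hterm, Finset.sum_add_distrib, ← Finset.mul_sum, ← Finset.mul_sum,
    pq_binomial_shift hq hqp 1 (m := m) x, momentSb hq hqp m x]
  have hG1 : (∏ s ∈ Finset.range m, (p ^ (s + 1) + q ^ (s + 1) * x)) * (1 + x)
      = pqEll p q (m + 1) x := (ell_peel1 m x).symm
  have hG2 : pqInt p q m * ((∏ s ∈ Finset.range (m - 1), (p ^ (s + 2) + q ^ (s + 2) * x)) *
      ((p + q * x) * (1 + x))) = pqInt p q m * pqEll p q (m + 1) x := by
    cases m with
    | zero => simp [pqInt_zero]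
    | succ w =>
      rw [show w + 1 - 1 = w by omega, ← ell_peel2 w x]
  linear_combination (pqInt p q (m + 1) * p ^ (m + 2) * x * (p + q * x)) * hG1 +
    (pqInt p q (m + 1) * q ^ 2 * p ^ 2 * x ^ 2) * hG2

end Moments
open scoped NNReal
lemma real_rpow_subadd (a b c : ℝ) (ha : 0 ≤ a) (hb : 0 ≤ b) (hc0 : 0 ≤ c) (hc1 : c ≤ 1) :
    (a + b) ^ c ≤ a ^ c + b ^ c := by
  have h := NNReal.rpow_add_le_add_rpow a.toNNReal b.toNNReal hc0 hc1
  have h2 : (((a.toNNReal + b.toNNReal) ^ c : ℝ≥0) : ℝ) ≤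
      ((a.toNNReal ^ c + b.toNNReal ^ c : ℝ≥0) : ℝ) := NNReal.coe_le_coe.2 h
  rw [NNReal.coe_rpow, NNReal.coe_add, NNReal.coe_add, NNReal.coe_rpow, NNReal.coe_rpow,
    Real.coe_toNNReal a ha, Real.coe_toNNReal b hb] at h2
  exact h2

lemma frac_lip (a b : ℝ) (ha : 0 ≤ a) (hb : 0 ≤ b) :
    |a / (1 + a) - b / (1 + b)| ≤ |a - b| := by
  have h1 : (0:ℝ) < 1 + a := by linarith
  have h2 : (0:ℝ) < 1 + b := by linarith
  have key : a / (1 + a) - b / (1 + b) = (a - b) / ((1 + a) * (1 + b)) := by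
    field_simp
    ring
  rw [key, abs_div, abs_of_pos (mul_pos h1 h2)]
  exact div_le_self (abs_nonneg _) (by nlinarith)

lemma sq_rpow_half (α y : ℝ) (hα : 0 ≤ α) : (y ^ 2) ^ (α / 2) = |y| ^ α := by
  rw [← sq_abs, ← Real.rpow_natCast |y| 2, ← Real.rpow_mul (abs_nonneg y),
    show ((2:ℕ):ℝ) * (α / 2) = α by push_cast; ring]
/-- auxiliary weight -/
def ccw (p q x : ℝ) (n k : ℕ) : ℝ :=
  p ^ ((n - k) * (n - k - 1) / 2) * q ^ (k * (k - 1) / 2) * pqBinom p q n k * x ^ k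

/-- auxiliary numerator -/
def ppw (p q : ℝ) (n k : ℕ) : ℝ := p ^ (n - k + 1) * pqInt p q k

section MainAux

variable {p q : ℝ} (hq : 0 < q) (hqp : q < p)

include hq hqp in
lemma ccw_sum (m : ℕ) (x : ℝ) :
    ∑ k ∈ Finset.range (m + 1 + 1), ccw p q x (m + 1) k = pqEll p q (m + 1) x := by
  unfold ccw; exact pq_binomial hq hqp (m + 1) x

include hq hqp in
lemma ccw_moment1 (m : ℕ) (x : ℝ) :
    (∑ k ∈ Finset.range (m + 1 + 1), ccw p q x (m + 1) k * ppw p q (m + 1) k) * (1 + x)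
      = pqInt p q (m + 1) * p * x * pqEll p q (m + 1) x := by
  unfold ccw ppw; exact moment1 hq hqp m x

include hq hqp in
lemma ccw_moment2 (m : ℕ) (x : ℝ) :
    (∑ k ∈ Finset.range (m + 1 + 1), ccw p q x (m + 1) k * ppw p q (m + 1) k ^ 2) *
        ((1 + x) * (p + q * x))
      = pqInt p q (m + 1) * pqEll p q (m + 1) x *
          (x * p ^ (m + 2) * (p + q * x) + q ^ 2 * p ^ 2 * pqInt p q m * x ^ 2) := by
  unfold ccw ppw; exact moment2 hq hqp m x

end MainAux
set_option maxHeartbeats 4000000 in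
/-- Theorem 3.2, Lipschitz-type estimate. -/
theorem bbh_lipschitz_estimate (n : ℕ) (hn : 1 ≤ n) (p q : ℝ)
    (hq : 0 < q) (hqp : q < p) (hp : p ≤ 1)
    (α : ℝ) (hα0 : 0 < α) (hα1 : α ≤ 1) (M : ℝ) (hM : 0 < M)
    (E : Set ℝ) (hE : E ⊆ Set.Ici 0) (hEne : E.Nonempty) (hEcl : IsClosed E)
    (f : ℝ → ℝ)
    (hfb : ∃ C : ℝ, ∀ t : ℝ, 0 ≤ t → |f t| ≤ C)
    (hfc : ContinuousOn f (Set.Ici 0))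
    (hf : ∀ t : ℝ, 0 ≤ t → ∀ y ∈ E,
      |f t - f y| ≤ M * |t / (1 + t) - y / (1 + y)| ^ α)
    (x : ℝ) (hx : 0 ≤ x) :
    |bbh p q n f x - p * q * f x| ≤
      M * (pqDelta p q n x ^ (α / 2) + 2 * Metric.infDist x E ^ α) := by
  obtain ⟨m, rfl⟩ : ∃ m, n = m + 1 := ⟨n - 1, by omega⟩
  have hp0 : 0 < p := hq.trans hqp
  have hpq0 : 0 < p * q := mul_pos hp0 hq
  have hpq1 : p * q ≤ 1 := by nlinarith
  have h1x : (0:ℝ) < 1 + x := by linarith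
  have hpx : (0:ℝ) < p + q * x := by nlinarith
  have hℓ : 0 < pqEll p q (m + 1) x := by
    rw [pqEll]
    apply Finset.prod_pos
    intro s _
    have h1 := pow_pos hp0 s
    have h2 := mul_nonneg (pow_nonneg hq.le s) hx
    linarith
  have hN : 0 < pqInt p q (m + 1 + 1) := pqInt_pos hq hqp (by omega)
  have hA0 : 0 ≤ pqInt p q (m + 1) := pqInt_nonneg hq hqp _
  have hB0 : 0 ≤ pqInt p q m := pqInt_nonneg hq hqp _
  have hccw0 : ∀ k, 0 ≤ ccw p q x (m + 1) k := by
    intro k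
    exact mul_nonneg (mul_nonneg (mul_nonneg (pow_nonneg hp0.le _) (pow_nonneg hq.le _))
      (pqBinom_pos hq hqp (m + 1) k).le) (pow_nonneg hx _)
  have hD0 : 0 ≤ Metric.infDist x E := Metric.infDist_nonneg
  have hDα0 : 0 ≤ Metric.infDist x E ^ α := Real.rpow_nonneg hD0 _
  obtain ⟨x₀, hx₀E, hx₀d⟩ := hEcl.exists_infDist_eq_dist hEne x
  have hx₀0 : 0 ≤ x₀ := hE hx₀E
  have hXX0 : |x / (1 + x) - x₀ / (1 + x₀)| ≤ Metric.infDist x E := by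
    calc |x / (1 + x) - x₀ / (1 + x₀)| ≤ |x - x₀| := frac_lip x x₀ hx hx₀0
      _ = dist x x₀ := (Real.dist_eq x x₀).symm
      _ = Metric.infDist x E := hx₀d.symm
  have hXXα : |x / (1 + x) - x₀ / (1 + x₀)| ^ α ≤ Metric.infDist x E ^ α :=
    Real.rpow_le_rpow (abs_nonneg _) hXX0 hα0.le
  -- node facts
  have hnode : ∀ k ∈ Finset.range (m + 1 + 1),
      0 ≤ pqNode p q (m + 1) k ∧
        pqNode p q (m + 1) k / (1 + pqNode p q (m + 1) k)
          = ppw p q (m + 1) k / pqInt p q (m + 1 + 1) := by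
    intro k hk
    have hkm : k < m + 1 + 1 := Finset.mem_range.mp hk
    obtain ⟨d, hd⟩ : ∃ d, m + 1 = k + d := ⟨m + 1 - k, by omega⟩
    have hsub : m + 1 - k = d := by omega
    have hnum0 : 0 ≤ p ^ (d + 1) * pqInt p q k :=
      mul_nonneg (pow_nonneg hp0.le _) (pqInt_nonneg hq hqp k)
    have hden : 0 < pqInt p q (d + 1) * q ^ k :=
      mul_pos (pqInt_pos hq hqp (by omega)) (pow_pos hq k)
    have hNsum : pqInt p q (d + 1) * q ^ k + p ^ (d + 1) * pqInt p q k
        = pqInt p q (m + 1 + 1) := by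
      have h := pqInt_add hqp k (d + 1)
      rw [show k + (d + 1) = m + 1 + 1 by omega] at h
      rw [h]; ring
    have hnodeeq : pqNode p q (m + 1) k
        = p ^ (d + 1) * pqInt p q k / (pqInt p q (d + 1) * q ^ k) := by
      rw [pqNode, hsub]
    have hnode0 : 0 ≤ pqNode p q (m + 1) k := by
      rw [hnodeeq]; exact div_nonneg hnum0 hden.le
    refine ⟨hnode0, ?_⟩
    have hppweq : ppw p q (m + 1) k = p ^ (d + 1) * pqInt p q k := by
      unfold ppw; rw [hsub]
    rw [hnodeeq, hppweq]
    have h1 : (1:ℝ) + p ^ (d + 1) * pqInt p q k / (pqInt p q (d + 1) * q ^ k)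
        = (pqInt p q (d + 1) * q ^ k + p ^ (d + 1) * pqInt p q k) / (pqInt p q (d + 1) * q ^ k) := by
      rw [eq_div_iff hden.ne', add_mul, div_mul_cancel₀ _ hden.ne']
      ring
    rw [h1, hNsum, div_div_div_cancel_right₀]
    exact hden.ne'
  -- bbh as weighted sum
  have hbbh : bbh p q (m + 1) f x = ∑ k ∈ Finset.range (m + 1 + 1),
      p * q / pqEll p q (m + 1) x * (ccw p q x (m + 1) k * f (pqNode p q (m + 1) k)) := by
    rw [bbh, Finset.mul_sum]
    apply Finset.sum_congr rfl
    intro k _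
    unfold ccw
    ring
  -- decomposition
  have hexp : (∑ k ∈ Finset.range (m + 1 + 1),
        p * q / pqEll p q (m + 1) x * (ccw p q x (m + 1) k * f (pqNode p q (m + 1) k)))
      - p * q / pqEll p q (m + 1) x * f x₀ * (∑ k ∈ Finset.range (m + 1 + 1), ccw p q x (m + 1) k)
      = ∑ k ∈ Finset.range (m + 1 + 1),
          p * q / pqEll p q (m + 1) x * (ccw p q x (m + 1) k * (f (pqNode p q (m + 1) k) - f x₀)) := by
    rw [Finset.mul_sum, ← Finset.sum_sub_distrib]
    exact Finset.sum_congr rfl fun k _ => by ring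
  have hdecomp : bbh p q (m + 1) f x - p * q * f x
      = (∑ k ∈ Finset.range (m + 1 + 1),
          p * q / pqEll p q (m + 1) x * (ccw p q x (m + 1) k * (f (pqNode p q (m + 1) k) - f x₀)))
        + p * q * (f x₀ - f x) := by
    rw [hbbh, ← hexp, ccw_sum hq hqp m x]
    field_simp
    ring
  -- moment sums in division form
  have hS1d : ∑ k ∈ Finset.range (m + 1 + 1), ccw p q x (m + 1) k * ppw p q (m + 1) k
      = pqInt p q (m + 1) * p * x * pqEll p q (m + 1) x / (1 + x) := by
    rw [eq_div_iff h1x.ne']; exact ccw_moment1 hq hqp m x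
  have hS2d : ∑ k ∈ Finset.range (m + 1 + 1), ccw p q x (m + 1) k * ppw p q (m + 1) k ^ 2
      = pqInt p q (m + 1) * pqEll p q (m + 1) x *
          (x * p ^ (m + 2) * (p + q * x) + q ^ 2 * p ^ 2 * pqInt p q m * x ^ 2)
          / ((1 + x) * (p + q * x)) := by
    rw [eq_div_iff (mul_pos h1x hpx).ne']; exact ccw_moment2 hq hqp m x
  set G : ℝ := pqInt p q (m + 1) * p ^ (m + 2) * (x / (1 + x)) / pqInt p q (m + 1 + 1) ^ 2
      + q ^ 2 * p ^ 2 * pqInt p q (m + 1) * pqInt p q m / pqInt p q (m + 1 + 1) ^ 2 *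
          (x / (1 + x)) ^ 2 * ((1 + x) / (p + q * x))
      - 2 * p * pqInt p q (m + 1) / pqInt p q (m + 1 + 1) * (x / (1 + x)) ^ 2
      + (x / (1 + x)) ^ 2 with hGdef
  have hPhi : ∑ k ∈ Finset.range (m + 1 + 1),
      ccw p q x (m + 1) k *
        (ppw p q (m + 1) k / pqInt p q (m + 1 + 1) - x / (1 + x)) ^ 2
      = pqEll p q (m + 1) x * G := by
    have hper : ∀ k ∈ Finset.range (m + 1 + 1),
        ccw p q x (m + 1) k *
          (ppw p q (m + 1) k / pqInt p q (m + 1 + 1) - x / (1 + x)) ^ 2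
        = ccw p q x (m + 1) k * ppw p q (m + 1) k ^ 2 * (1 / pqInt p q (m + 1 + 1) ^ 2)
          - (2 * (x / (1 + x)) / pqInt p q (m + 1 + 1)) *
              (ccw p q x (m + 1) k * ppw p q (m + 1) k)
          + (x / (1 + x)) ^ 2 * ccw p q x (m + 1) k := by
      intro k _
      field_simp
      ring
    rw [Finset.sum_congr rfl hper, Finset.sum_add_distrib, Finset.sum_sub_distrib,
      ← Finset.sum_mul, ← Finset.mul_sum, ← Finset.mul_sum, hS1d, hS2d, ccw_sum hq hqp m x,
      hGdef]
    field_simp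
  have hPhi0 : 0 ≤ ∑ k ∈ Finset.range (m + 1 + 1),
      ccw p q x (m + 1) k *
        (ppw p q (m + 1) k / pqInt p q (m + 1 + 1) - x / (1 + x)) ^ 2 :=
    Finset.sum_nonneg fun k _ => mul_nonneg (hccw0 k) (sq_nonneg _)
  have hG0 : 0 ≤ G := by
    have h : 0 ≤ pqEll p q (m + 1) x * G := hPhi ▸ hPhi0
    have h2 : pqEll p q (m + 1) x * 0 ≤ pqEll p q (m + 1) x * G := by simpa using h
    exact le_of_mul_le_mul_left h2 hℓ
  -- the key inequality p*q*G ≤ pqDelta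
  have hAN : p * pqInt p q (m + 1) + q ^ (m + 1) = pqInt p q (m + 1 + 1) := by
    have h := pqInt_add hqp (m + 1) 1
    rw [pqInt_one hqp] at h
    rw [h]; ring
  have hfrac : p * pqInt p q (m + 1) / pqInt p q (m + 1 + 1) ≤ 1 := by
    rw [div_le_one hN]
    nlinarith [pow_pos hq (m + 1)]
  have hdelta : p * q * G ≤ pqDelta p q (m + 1) x := by
    have hid : pqDelta p q (m + 1) x = p * q * G
        + (x / (1 + x)) ^ 2 *
          (p ^ 2 * q ^ 3 * pqInt p q (m + 1) * pqInt p q m * ((1 + x) / (p + q * x)) * (1 - p)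
              / pqInt p q (m + 1 + 1) ^ 2
            + (1 - p * q - 2 * q * (1 - p) *
                (p * pqInt p q (m + 1) / pqInt p q (m + 1 + 1)))) := by
      rw [pqDelta, hGdef]
      simp only [Nat.add_sub_cancel]
      ring
    have hT1 : 0 ≤ p ^ 2 * q ^ 3 * pqInt p q (m + 1) * pqInt p q m *
        ((1 + x) / (p + q * x)) * (1 - p) / pqInt p q (m + 1 + 1) ^ 2 := by
      apply div_nonneg _ (sq_nonneg _)
      have h1p : (0:ℝ) ≤ 1 - p := by linarith
      have hR : (0:ℝ) ≤ (1 + x) / (p + q * x) := div_nonneg h1x.le hpx.le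
      have hpq2 : (0:ℝ) ≤ p ^ 2 * q ^ 3 := by positivity
      exact mul_nonneg (mul_nonneg (mul_nonneg (mul_nonneg hpq2 hA0) hB0) hR) h1p
    have hT2 : 0 ≤ 1 - p * q - 2 * q * (1 - p) *
        (p * pqInt p q (m + 1) / pqInt p q (m + 1 + 1)) := by
      have h1p : (0:ℝ) ≤ 1 - p := by linarith
      have h2q : (0:ℝ) ≤ 2 * q * (1 - p) :=
        mul_nonneg (mul_nonneg (by norm_num) hq.le) h1p
      have hg : 2 * q * (1 - p) * (p * pqInt p q (m + 1) / pqInt p q (m + 1 + 1))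
          ≤ 2 * q * (1 - p) * 1 := mul_le_mul_of_nonneg_left hfrac h2q
      nlinarith [sq_nonneg (1 - q), mul_pos hq (sub_pos.mpr hqp)]
    rw [hid]
    nlinarith [mul_nonneg (sq_nonneg (x / (1 + x))) (add_nonneg hT1 hT2)]
  have hdelta0 : 0 ≤ pqDelta p q (m + 1) x :=
    le_trans (mul_nonneg hpq0.le hG0) hdelta
  -- Jensen
  have hw1 : ∑ k ∈ Finset.range (m + 1 + 1), ccw p q x (m + 1) k / pqEll p q (m + 1) x = 1 := by
    rw [← Finset.sum_div, ccw_sum hq hqp m x, div_self hℓ.ne']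
  have hjen := (Real.concaveOn_rpow (by linarith : (0:ℝ) ≤ α / 2)
      (by linarith : α / 2 ≤ 1)).le_map_sum
      (t := Finset.range (m + 1 + 1))
      (w := fun k => ccw p q x (m + 1) k / pqEll p q (m + 1) x)
      (p := fun k => (ppw p q (m + 1) k / pqInt p q (m + 1 + 1) - x / (1 + x)) ^ 2)
      (fun k _ => div_nonneg (hccw0 k) hℓ.le) hw1
      (fun k _ => Set.mem_Ici.mpr (sq_nonneg _))
  simp only [smul_eq_mul] at hjen
  have hsum_wu : ∑ k ∈ Finset.range (m + 1 + 1),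
      ccw p q x (m + 1) k / pqEll p q (m + 1) x *
        (ppw p q (m + 1) k / pqInt p q (m + 1 + 1) - x / (1 + x)) ^ 2 = G := by
    have hper : ∀ k ∈ Finset.range (m + 1 + 1),
        ccw p q x (m + 1) k / pqEll p q (m + 1) x *
          (ppw p q (m + 1) k / pqInt p q (m + 1 + 1) - x / (1 + x)) ^ 2
        = ccw p q x (m + 1) k *
            (ppw p q (m + 1) k / pqInt p q (m + 1 + 1) - x / (1 + x)) ^ 2
            / pqEll p q (m + 1) x := fun k _ => by ring
    rw [Finset.sum_congr rfl hper, ← Finset.sum_div, hPhi,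
      mul_div_cancel_left₀ _ hℓ.ne']
  rw [hsum_wu] at hjen
  -- p*q*G^(α/2) ≤ δ^(α/2)
  have hpow : p * q * G ^ (α / 2) ≤ pqDelta p q (m + 1) x ^ (α / 2) := by
    have hGd : G ≤ pqDelta p q (m + 1) x / (p * q) := by
      rw [le_div_iff₀ hpq0]
      linarith [hdelta]
    have h1 : G ^ (α / 2) ≤ (pqDelta p q (m + 1) x / (p * q)) ^ (α / 2) :=
      Real.rpow_le_rpow hG0 hGd (by linarith)
    have h2 : (pqDelta p q (m + 1) x / (p * q)) ^ (α / 2)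
        = pqDelta p q (m + 1) x ^ (α / 2) / (p * q) ^ (α / 2) :=
      Real.div_rpow hdelta0 hpq0.le (α / 2)
    calc p * q * G ^ (α / 2)
        ≤ p * q * (pqDelta p q (m + 1) x ^ (α / 2) / (p * q) ^ (α / 2)) := by
          rw [← h2]; exact mul_le_mul_of_nonneg_left h1 hpq0.le
      _ = (p * q) ^ (1 - α / 2) * pqDelta p q (m + 1) x ^ (α / 2) := by
          rw [Real.rpow_sub hpq0, Real.rpow_one]; ring
      _ ≤ 1 * pqDelta p q (m + 1) x ^ (α / 2) :=
          mul_le_mul_of_nonneg_right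
            (Real.rpow_le_one hpq0.le hpq1 (by linarith)) (Real.rpow_nonneg hdelta0 _)
      _ = pqDelta p q (m + 1) x ^ (α / 2) := one_mul _
  -- per-term bound
  have hterm : ∀ k ∈ Finset.range (m + 1 + 1),
      |p * q / pqEll p q (m + 1) x * (ccw p q x (m + 1) k * (f (pqNode p q (m + 1) k) - f x₀))|
      ≤ p * q / pqEll p q (m + 1) x * ccw p q x (m + 1) k *
          (M * (|ppw p q (m + 1) k / pqInt p q (m + 1 + 1) - x / (1 + x)| ^ α
            + Metric.infDist x E ^ α)) := by
    intro k hk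
    obtain ⟨hn0, hneq⟩ := hnode k hk
    have hw : 0 ≤ p * q / pqEll p q (m + 1) x :=
      div_nonneg hpq0.le hℓ.le
    rw [abs_mul, abs_mul, abs_of_nonneg hw, abs_of_nonneg (hccw0 k), ← mul_assoc]
    apply mul_le_mul_of_nonneg_left _ (mul_nonneg hw (hccw0 k))
    have h1 := hf (pqNode p q (m + 1) k) hn0 x₀ hx₀E
    rw [hneq] at h1
    refine h1.trans ?_
    apply mul_le_mul_of_nonneg_left _ hM.le
    calc |ppw p q (m + 1) k / pqInt p q (m + 1 + 1) - x₀ / (1 + x₀)| ^ α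
        ≤ (|ppw p q (m + 1) k / pqInt p q (m + 1 + 1) - x / (1 + x)|
            + |x / (1 + x) - x₀ / (1 + x₀)|) ^ α :=
          Real.rpow_le_rpow (abs_nonneg _) (abs_sub_le _ _ _) hα0.le
      _ ≤ |ppw p q (m + 1) k / pqInt p q (m + 1 + 1) - x / (1 + x)| ^ α
            + |x / (1 + x) - x₀ / (1 + x₀)| ^ α :=
          real_rpow_subadd _ _ _ (abs_nonneg _) (abs_nonneg _) hα0.le hα1
      _ ≤ |ppw p q (m + 1) k / pqInt p q (m + 1 + 1) - x / (1 + x)| ^ α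
            + Metric.infDist x E ^ α := by linarith [hXXα]
  -- splitting the summed bound
  have hsplit : ∑ k ∈ Finset.range (m + 1 + 1),
      p * q / pqEll p q (m + 1) x * ccw p q x (m + 1) k *
        (M * (|ppw p q (m + 1) k / pqInt p q (m + 1 + 1) - x / (1 + x)| ^ α
          + Metric.infDist x E ^ α))
      = M * ((p * q) * ∑ k ∈ Finset.range (m + 1 + 1),
            ccw p q x (m + 1) k / pqEll p q (m + 1) x *
              ((ppw p q (m + 1) k / pqInt p q (m + 1 + 1) - x / (1 + x)) ^ 2) ^ (α / 2))
        + M * Metric.infDist x E ^ α * (p * q) := by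
    have hper : ∀ k ∈ Finset.range (m + 1 + 1),
        p * q / pqEll p q (m + 1) x * ccw p q x (m + 1) k *
          (M * (|ppw p q (m + 1) k / pqInt p q (m + 1 + 1) - x / (1 + x)| ^ α
            + Metric.infDist x E ^ α))
        = M * (p * q) * (ccw p q x (m + 1) k / pqEll p q (m + 1) x *
            ((ppw p q (m + 1) k / pqInt p q (m + 1 + 1) - x / (1 + x)) ^ 2) ^ (α / 2))
          + M * Metric.infDist x E ^ α * (p * q) *
              (ccw p q x (m + 1) k / pqEll p q (m + 1) x) := by
      intro k _
      rw [sq_rpow_half α _ hα0.le]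
      ring
    rw [Finset.sum_congr rfl hper, Finset.sum_add_distrib, ← Finset.mul_sum, ← Finset.mul_sum,
      hw1, mul_one]
    ring
  -- final calc
  calc |bbh p q (m + 1) f x - p * q * f x|
      = |(∑ k ∈ Finset.range (m + 1 + 1),
            p * q / pqEll p q (m + 1) x *
              (ccw p q x (m + 1) k * (f (pqNode p q (m + 1) k) - f x₀)))
          + p * q * (f x₀ - f x)| := by rw [hdecomp]
    _ ≤ |∑ k ∈ Finset.range (m + 1 + 1),
            p * q / pqEll p q (m + 1) x *
              (ccw p q x (m + 1) k * (f (pqNode p q (m + 1) k) - f x₀))|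
          + |p * q * (f x₀ - f x)| := abs_add_le _ _
    _ ≤ (∑ k ∈ Finset.range (m + 1 + 1),
            p * q / pqEll p q (m + 1) x * ccw p q x (m + 1) k *
              (M * (|ppw p q (m + 1) k / pqInt p q (m + 1 + 1) - x / (1 + x)| ^ α
                + Metric.infDist x E ^ α)))
          + p * q * (M * Metric.infDist x E ^ α) := by
        apply add_le_add
        · exact (Finset.abs_sum_le_sum_abs _ _).trans (Finset.sum_le_sum hterm)
        · rw [abs_mul, abs_of_pos hpq0]
          have h2 := hf x hx x₀ hx₀E
          rw [abs_sub_comm (f x₀) (f x)]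
          calc p * q * |f x - f x₀|
              ≤ p * q * (M * |x / (1 + x) - x₀ / (1 + x₀)| ^ α) :=
                mul_le_mul_of_nonneg_left h2 hpq0.le
            _ ≤ p * q * (M * Metric.infDist x E ^ α) :=
                mul_le_mul_of_nonneg_left (mul_le_mul_of_nonneg_left hXXα hM.le) hpq0.le
    _ = M * ((p * q) * ∑ k ∈ Finset.range (m + 1 + 1),
            ccw p q x (m + 1) k / pqEll p q (m + 1) x *
              ((ppw p q (m + 1) k / pqInt p q (m + 1 + 1) - x / (1 + x)) ^ 2) ^ (α / 2))
          + M * Metric.infDist x E ^ α * (p * q) + p * q * (M * Metric.infDist x E ^ α) := by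
        rw [hsplit]
    _ ≤ M * pqDelta p q (m + 1) x ^ (α / 2)
          + M * Metric.infDist x E ^ α * 1 + 1 * (M * Metric.infDist x E ^ α) := by
        apply add_le_add (add_le_add ?_ ?_) ?_
        · have hj2 : (p * q) * (∑ k ∈ Finset.range (m + 1 + 1),
              ccw p q x (m + 1) k / pqEll p q (m + 1) x *
                ((ppw p q (m + 1) k / pqInt p q (m + 1 + 1) - x / (1 + x)) ^ 2) ^ (α / 2))
              ≤ pqDelta p q (m + 1) x ^ (α / 2) :=
            le_trans (mul_le_mul_of_nonneg_left hjen hpq0.le) hpow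
          exact mul_le_mul_of_nonneg_left hj2 hM.le
        · exact mul_le_mul_of_nonneg_left hpq1 (mul_nonneg hM.le hDα0)
        · exact mul_le_mul_of_nonneg_right hpq1 (mul_nonneg hM.le hDα0)
    _ = M * (pqDelta p q (m + 1) x ^ (α / 2) + 2 * Metric.infDist x E ^ α) := by ring
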